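/- arXiv:2509.13040 — 5 statements merged into one kernel-verified Lean document; each statement's English description precedes it below -/
import Mathlib

section
/- Let G be a Tanner graph with a rooted tree decomposition, and let t be a join node with children t1 and t2 (B_t = B_{t1} = B_{t2}). Suppose S_{t1} is a trapping set with parameters (R_{t1},Q) in G_{t1} and S_{t2} is a trapping set with parameters (R_{t2},Q) in G_{t2}. Then S := S_{t1} ∪ S_{t2} is a trapping set with parameters (R,Q) in G_t, where R = R_{t1} ⊕ R_{t2} ⊕ Γ_o(G_t[Q ∪ B_t^c]). -/
/-- A Tanner graph: a bipartite graph on vertex set `V` partitioned into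
variable nodes `L` and check nodes `R`, every edge joining `L` and `R`. -/
structure TannerGraph (V : Type*) where
  G : SimpleGraph V
  L : Set V
  R : Set V
  disj : Disjoint L R
  cover : L ∪ R = Set.univ
  bipartite : ∀ ⦃u v⦄, G.Adj u v → (u ∈ L ∧ v ∈ R) ∨ (u ∈ R ∧ v ∈ L)

/-- `Γ_o(G[S])`: check nodes having an odd number of neighbours in `S`. -/
def TannerGraph.Gamma {V : Type*} (TG : TannerGraph V) (S : Set V) : Set V :=
  {c | c ∈ TG.R ∧ Odd ((TG.G.neighborSet c ∩ S).ncard)}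

/-- A rooted tree decomposition of the graph `G`: `T` is a finite tree with
root `root` and bags `B i ⊆ V` covering all vertices and edges, such that for
every vertex the set of bags containing it induces a connected subgraph of `T`. -/
structure IsRootedTreeDecomp {V ι : Type*} (G : SimpleGraph V)
    (T : SimpleGraph ι) (root : ι) (B : ι → Set V) : Prop where
  isTree : T.IsTree
  covers : ∀ v, ∃ i, v ∈ B i
  coversEdge : ∀ ⦃u v⦄, G.Adj u v → ∃ i, u ∈ B i ∧ v ∈ B i
  connBags : ∀ v, (T.induce {i | v ∈ B i}).Connected

/-- `Desc T root t i`: `i` is a descendant of `t` in the tree `T` rooted at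
`root`, i.e. `t` lies on a path from the root to `i` (`t` itself included). -/
def Desc {ι : Type*} (T : SimpleGraph ι) (root : ι) (t i : ι) : Prop :=
  ∃ p : T.Walk root i, p.IsPath ∧ t ∈ p.support

/-- `IsChildOf T root s t`: `s` is a child of `t` in the rooted tree. -/
def IsChildOf {ι : Type*} (T : SimpleGraph ι) (root : ι) (s t : ι) : Prop :=
  T.Adj t s ∧ Desc T root t s

/-- `∪_{i ∈ T_t} B_i`: union of the bags over all descendants of `t`;
this is the vertex set of the induced subgraph `G_t`. -/
def subVerts {V ι : Type*} (T : SimpleGraph ι) (root : ι) (B : ι → Set V)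
    (t : ι) : Set V :=
  {v | ∃ i, Desc T root t i ∧ v ∈ B i}

/-- `Γ_o(G_t[S])`, where `W` is the vertex set of `G_t`: check nodes of `G_t`
having an odd number of `G_t`-neighbours in `S`. -/
def GammaLoc {V : Type*} (TG : TannerGraph V) (W S : Set V) : Set V :=
  {c | c ∈ TG.R ∧ c ∈ W ∧ Odd ((TG.G.neighborSet c ∩ W ∩ S).ncard)}

/-- `S` is a trapping set with parameters `(R', Q)` in `G_t`, where `W` is the
vertex set of `G_t` and `Bt` is the bag at `t`. -/
def HasParams {V : Type*} (TG : TannerGraph V) (W Bt S R' Q : Set V) : Prop :=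
  S.Nonempty ∧ S ⊆ W ∩ TG.L ∧ S ∩ (Bt ∩ TG.L) = Q ∧ GammaLoc TG W S = R'

/-- `S` is a trapping set with extended parameters `(I, Q, d)` in `G_t`. -/
def HasExtParams {V : Type*} (TG : TannerGraph V) (W Bt S I Q : Set V)
    (d : ℕ) : Prop :=
  S.Nonempty ∧ S ⊆ W ∩ TG.L ∧ S ∩ (Bt ∩ TG.L) = Q ∧
    GammaLoc TG W S ∩ (Bt ∩ TG.R) = I ∧ (GammaLoc TG W S \ (Bt ∩ TG.R)).ncard = d

/-- `Γ_o(G_t[Q ∪ B_t^c]) = {c ∈ B_t^c : |N_{G_t}(c) ∩ Q| is odd}`. -/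
def GammaBag {V : Type*} (TG : TannerGraph V) (W Bt Q : Set V) : Set V :=
  {c | c ∈ Bt ∩ TG.R ∧ Odd ((TG.G.neighborSet c ∩ W ∩ Q).ncard)}


open SimpleGraph

section TreeAux
variable {ι : Type*} [DecidableEq ι] {T : SimpleGraph ι} {root : ι}

/-- helper: uniqueness of the next element after `a` in a nodup list. -/
lemma list_next_unique {α : Type*} : ∀ {l : List α} (s1 : List α) {s2 e1 e2 : List α} {a b c : α},
    l.Nodup → l = s1 ++ a :: b :: e1 → l = s2 ++ a :: c :: e2 → b = c := by
  intro l s1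
  induction s1 generalizing l with
  | nil =>
    rintro s2 e1 e2 a b c hn rfl h2
    cases s2 with
    | nil =>
      simp only [List.nil_append, List.cons.injEq] at h2
      exact h2.2.1
    | cons x s2' =>
      simp only [List.nil_append, List.cons_append, List.cons.injEq] at h2
      obtain ⟨rfl, h2⟩ := h2
      exfalso
      have ha : a ∈ b :: e1 := by rw [h2]; simp
      simp only [List.nil_append, List.nodup_cons] at hn
      exact hn.1 ha
  | cons x s1' ih =>
    rintro s2 e1 e2 a b c hn rfl h2
    cases s2 with
    | nil =>
      simp only [List.nil_append, List.cons_append, List.cons.injEq] at h2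
      obtain ⟨rfl, h2⟩ := h2
      exfalso
      have hm : x ∈ s1' ++ x :: b :: e1 := by simp
      simp only [List.cons_append, List.nodup_cons] at hn
      exact hn.1 (by rw [h2] at hm; simpa using hm)
    | cons y s2' =>
      simp only [List.cons_append, List.cons.injEq] at h2
      obtain ⟨rfl, h2⟩ := h2
      simp only [List.cons_append, List.nodup_cons] at hn
      exact ih hn.2 rfl h2

lemma support_eq_concat' {u v : ι} (w : T.Walk u v) : ∃ l, w.support = l ++ [v] := by
  refine ⟨w.reverse.support.tail.reverse, ?_⟩
  have h := w.reverse.support_eq_cons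
  rw [Walk.support_reverse] at h
  calc w.support = w.support.reverse.reverse := by simp
    _ = _ := by rw [h]; simp

lemma desc_unique (hA : T.IsAcyclic) {t i : ι} (hd : Desc T root t i)
    {p : T.Walk root i} (hp : p.IsPath) : t ∈ p.support := by
  obtain ⟨q, hq, ht⟩ := hd
  have : (⟨p, hp⟩ : T.Path root i) = ⟨q, hq⟩ := hA.path_unique _ _
  rw [show p = q from congrArg Subtype.val this]
  exact ht

lemma desc_self (hC : T.Connected) (t : ι) : Desc T root t t := by
  obtain ⟨w⟩ := hC.preconnected root t
  exact ⟨w.toPath.1, w.toPath.2, Walk.end_mem_support _⟩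

lemma desc_trans (hA : T.IsAcyclic) {t s i : ι} (h1 : Desc T root t s)
    (h2 : Desc T root s i) : Desc T root t i := by
  obtain ⟨p, hp, hs⟩ := h2
  exact ⟨p, hp, (p.support_takeUntil_subset hs) (desc_unique hA h1 (hp.takeUntil hs))⟩

/-- `[t, t1]` is an infix of the support of any root→k path passing through `t1`,
when `t1` is a child of `t`. -/
lemma pair_infix (hT : T.IsTree) {t t1 k : ι} (hc : IsChildOf T root t1 t)
    {p : T.Walk root k} (hp : p.IsPath) (h1 : t1 ∈ p.support) :
    [t, t1] <:+: p.support := by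
  have hA := hT.IsAcyclic
  set q := p.takeUntil t1 h1 with hq
  have hqp : q.IsPath := hp.takeUntil h1
  have ht : t ∈ q.support := desc_unique hA hc.2 hqp
  have hedge : (q.dropUntil t ht) = Walk.cons hc.1 Walk.nil := by
    have h2 : (Walk.cons hc.1 Walk.nil : T.Walk t t1).IsPath := by
      rw [Walk.cons_isPath_iff]
      simp [hc.1.ne]
    have := hA.path_unique ⟨q.dropUntil t ht, hqp.dropUntil ht⟩ ⟨Walk.cons hc.1 Walk.nil, h2⟩
    exact congrArg Subtype.val this
  obtain ⟨l, hl⟩ := support_eq_concat' (q.takeUntil t ht)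
  have hqs : q.support = l ++ [t, t1] := by
    conv_lhs => rw [← q.take_spec ht]
    rw [Walk.support_append, hl, hedge]
    simp
  have hps : p.support = (l ++ [t, t1]) ++ (p.dropUntil t1 h1).support.tail := by
    conv_lhs => rw [← p.take_spec h1]
    rw [Walk.support_append, hqs]
  exact ⟨l, (p.dropUntil t1 h1).support.tail, by rw [hps]⟩

/-- A vertex cannot descend from two distinct children of the same node. -/
lemma no_both (hT : T.IsTree) {t t1 t2 k : ι} (hc1 : IsChildOf T root t1 t)
    (hc2 : IsChildOf T root t2 t) (hne : t1 ≠ t2)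
    (h1 : Desc T root t1 k) (h2 : Desc T root t2 k) : False := by
  obtain ⟨p, hp, hm1⟩ := h1
  have hm2 : t2 ∈ p.support := desc_unique hT.IsAcyclic h2 hp
  obtain ⟨s1, e1, hs1⟩ := pair_infix hT hc1 hp hm1
  obtain ⟨s2, e2, hs2⟩ := pair_infix hT hc2 hp hm2
  have e1' : p.support = s1 ++ t :: t1 :: e1 := by rw [← hs1]; simp
  have e2' : p.support = s2 ++ t :: t2 :: e2 := by rw [← hs2]; simp
  exact hne (list_next_unique s1 hp.support_nodup e1' e2')

end TreeAux

section DecompAux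
variable {V ι : Type*} [DecidableEq ι] {TG : TannerGraph V} {T : SimpleGraph ι} {root : ι}
  {B : ι → Set V}

/-- If `c` lies in bags `j` and `k`, and `x` is above `j`, then either `x` is above `k`
or `c ∈ B x`. -/
lemma bag_connect (hD : IsRootedTreeDecomp TG.G T root B) {c : V} {j k x : ι}
    (hj : c ∈ B j) (hk : c ∈ B k) (hx : Desc T root x j) :
    Desc T root x k ∨ c ∈ B x := by
  obtain ⟨w'⟩ := (hD.connBags c).preconnected ⟨k, hk⟩ ⟨j, hj⟩
  let w : T.Walk k j := w'.map (SimpleGraph.Embedding.induce {i | c ∈ B i}).toHom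
  have hwbag : ∀ y ∈ w.support, c ∈ B y := by
    intro y hy
    have hy2 : y ∈ w'.support.map (SimpleGraph.Embedding.induce (G := T) {i | c ∈ B i}).toHom := by
      rw [← Walk.support_map]; exact hy
    rw [List.mem_map] at hy2
    obtain ⟨⟨z, hz⟩, _, rfl⟩ := hy2
    exact hz
  obtain ⟨p0'⟩ := hD.isTree.isConnected.preconnected root k
  obtain ⟨p0, hp0⟩ : ∃ p : T.Walk root k, p.IsPath := ⟨p0'.toPath.1, p0'.toPath.2⟩
  have hpath := (p0.append w).bypass_isPath
  have hmem : x ∈ (p0.append w).bypass.support := desc_unique hD.isTree.IsAcyclic hx hpath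
  have hm2 := (p0.append w).support_bypass_subset hmem
  rw [Walk.mem_support_append_iff] at hm2
  rcases hm2 with h | h
  · exact Or.inl ⟨p0, hp0, h⟩
  · exact Or.inr (hwbag x h)

/-- The vertex set of `G_t` is covered by those of its (only two) children
together with the bag at `t`. -/
lemma subVerts_cover (hD : IsRootedTreeDecomp TG.G T root B) {t t1 t2 : ι}
    (hc1 : IsChildOf T root t1 t)
    (honly : ∀ s, IsChildOf T root s t → s = t1 ∨ s = t2)
    (hB1 : B t = B t1) :
    subVerts T root B t ⊆ subVerts T root B t1 ∪ subVerts T root B t2 := by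
  have hC := hD.isTree.isConnected
  rintro v ⟨i, ⟨p, hp, ht⟩, hv⟩
  by_cases hit : i = t
  · subst hit
    exact Or.inl ⟨t1, desc_self hC t1, hB1 ▸ hv⟩
  · have hti : t ≠ i := fun h => hit h.symm
    obtain ⟨s, hadj, d', hd⟩ := Walk.exists_eq_cons_of_ne hti (p.dropUntil t ht)
    -- s is in the tail of the support of the drop part
    have hstail : s ∈ (p.dropUntil t ht).support.tail := by
      rw [hd, Walk.support_cons]
      simp
    have hsp : s ∈ p.support :=
      p.support_dropUntil_subset ht (List.mem_of_mem_tail hstail)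
    -- s is not in the take part, by nodup of p
    have hnottake : s ∉ (p.takeUntil t ht).support := by
      intro hmem
      have hnodup : ((p.takeUntil t ht).append (p.dropUntil t ht)).IsPath := by
        rw [p.take_spec ht]; exact hp
      rw [Walk.isPath_def, Walk.support_append, List.nodup_append] at hnodup
      exact hnodup.2.2 s hmem s hstail rfl
    -- the concatenated walk root → s is a path witnessing Desc t s
    have hpathq : ((p.takeUntil t ht).concat hadj).IsPath := by
      rw [Walk.isPath_def, Walk.support_concat,
        List.nodup_append]
      exact ⟨(hp.takeUntil ht).support_nodup, List.nodup_singleton s,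
        by intro y hy z hz hyz; rw [List.mem_singleton] at hz; exact hnottake (by rw [← hz, ← hyz]; exact hy)⟩
    have hdts : Desc T root t s :=
      ⟨(p.takeUntil t ht).concat hadj, hpathq, by
        rw [Walk.support_concat]
        exact List.mem_append_left _ (Walk.end_mem_support _)⟩
    have hchild : IsChildOf T root s t := ⟨hadj, hdts⟩
    have hdsi : Desc T root s i := ⟨p, hp, hsp⟩
    rcases honly s hchild with rfl | rfl
    · exact Or.inl ⟨i, hdsi, hv⟩
    · exact Or.inr ⟨i, hdsi, hv⟩

end DecompAux

/-- join-node combination rule for trapping-set parameters. -/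
theorem stmt_7 {V ι : Type*} [Fintype V] [Fintype ι]
    (TG : TannerGraph V) (T : SimpleGraph ι) (root : ι) (B : ι → Set V)
    (hD : IsRootedTreeDecomp TG.G T root B)
    (t t1 t2 : ι)
    (hc1 : IsChildOf T root t1 t) (hc2 : IsChildOf T root t2 t) (hne : t1 ≠ t2)
    (honly : ∀ s, IsChildOf T root s t → s = t1 ∨ s = t2)
    (hB1 : B t = B t1) (hB2 : B t = B t2)
    (S1 S2 R1 R2 Q : Set V)
    (h1 : HasParams TG (subVerts T root B t1) (B t1) S1 R1 Q)
    (h2 : HasParams TG (subVerts T root B t2) (B t2) S2 R2 Q) :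
    HasParams TG (subVerts T root B t) (B t) (S1 ∪ S2)
      (symmDiff (symmDiff R1 R2) (GammaBag TG (subVerts T root B t) (B t) Q)) Q := by
  classical
  obtain ⟨hS1ne, hS1sub, hQ1, hR1⟩ := h1
  obtain ⟨hS2ne, hS2sub, hQ2, hR2⟩ := h2
  have hA := hD.isTree.IsAcyclic
  have hC := hD.isTree.isConnected
  set W1 := subVerts T root B t1 with hW1def
  set W2 := subVerts T root B t2 with hW2def
  set W := subVerts T root B t with hWdef
  have hW1W : W1 ⊆ W := by rintro v ⟨i, hdi, hv⟩; exact ⟨i, desc_trans hA hc1.2 hdi, hv⟩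
  have hW2W : W2 ⊆ W := by rintro v ⟨i, hdi, hv⟩; exact ⟨i, desc_trans hA hc2.2 hdi, hv⟩
  have hBtW1 : B t ⊆ W1 := fun v hv => ⟨t1, desc_self hC t1, hB1 ▸ hv⟩
  have hBtW2 : B t ⊆ W2 := fun v hv => ⟨t2, desc_self hC t2, hB2 ▸ hv⟩
  have hWsub : W ⊆ W1 ∪ W2 := subVerts_cover hD hc1 honly hB1
  have hsep : ∀ v, v ∈ W1 → v ∈ W2 → v ∈ B t := by
    rintro v ⟨j, hdj, hvj⟩ ⟨m, hdm, hvm⟩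
    rcases bag_connect hD hvj hvm hdj with h | h
    · exact absurd h (fun h => no_both hD.isTree hc1 hc2 hne h hdm)
    · exact hB1 ▸ h
  have hsepE : ∀ c v, TG.G.Adj c v → c ∈ W1 → c ∉ B t → v ∈ W2 → v ∉ B t → False := by
    rintro c v hadj ⟨j, hdj, hcj⟩ hcB ⟨m, hdm, hvm⟩ hvB
    obtain ⟨k, hck, hvk⟩ := hD.coversEdge hadj
    rcases bag_connect hD hcj hck hdj with h1' | h1'
    · rcases bag_connect hD hvm hvk hdm with h2' | h2'
      · exact no_both hD.isTree hc1 hc2 hne h1' h2'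
      · exact hvB (hB2 ▸ h2')
    · exact hcB (hB1 ▸ h1')
  have hQsub1 : Q ⊆ S1 := by rw [← hQ1]; exact Set.inter_subset_left
  have hQsub2 : Q ⊆ S2 := by rw [← hQ2]; exact Set.inter_subset_left
  have hS12 : S1 ∩ S2 = Q := by
    apply Set.Subset.antisymm
    · rintro x ⟨hx1, hx2⟩
      have hxB : x ∈ B t := hsep x (hS1sub hx1).1 (hS2sub hx2).1
      rw [← hQ1]
      exact ⟨hx1, hB1 ▸ hxB, (hS1sub hx1).2⟩
    · exact fun x hx => ⟨hQsub1 hx, hQsub2 hx⟩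
  have hNS1 : ∀ c, TG.G.neighborSet c ∩ W ∩ S1 = TG.G.neighborSet c ∩ W1 ∩ S1 := by
    intro c
    ext v
    constructor
    · rintro ⟨⟨hn, _⟩, hs⟩; exact ⟨⟨hn, (hS1sub hs).1⟩, hs⟩
    · rintro ⟨⟨hn, hw⟩, hs⟩; exact ⟨⟨hn, hW1W hw⟩, hs⟩
  have hNS2 : ∀ c, TG.G.neighborSet c ∩ W ∩ S2 = TG.G.neighborSet c ∩ W2 ∩ S2 := by
    intro c
    ext v
    constructor
    · rintro ⟨⟨hn, _⟩, hs⟩; exact ⟨⟨hn, (hS2sub hs).1⟩, hs⟩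
    · rintro ⟨⟨hn, hw⟩, hs⟩; exact ⟨⟨hn, hW2W hw⟩, hs⟩
  have hNQ : ∀ c, TG.G.neighborSet c ∩ W ∩ Q =
      (TG.G.neighborSet c ∩ W1 ∩ S1) ∩ (TG.G.neighborSet c ∩ W2 ∩ S2) := by
    intro c
    ext v
    constructor
    · rintro ⟨⟨hn, hw⟩, hq⟩
      exact ⟨⟨⟨hn, (hS1sub (hQsub1 hq)).1⟩, hQsub1 hq⟩,
        ⟨⟨hn, (hS2sub (hQsub2 hq)).1⟩, hQsub2 hq⟩⟩
    · rintro ⟨⟨⟨hn, hw1⟩, hs1⟩, ⟨⟨-, hw2⟩, hs2⟩⟩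
      have hvq : v ∈ Q := by rw [← hS12]; exact ⟨hs1, hs2⟩
      exact ⟨⟨hn, hW1W hw1⟩, hvq⟩
  have hNunion : ∀ c, TG.G.neighborSet c ∩ W ∩ (S1 ∪ S2) =
      (TG.G.neighborSet c ∩ W1 ∩ S1) ∪ (TG.G.neighborSet c ∩ W2 ∩ S2) := by
    intro c
    rw [Set.inter_union_distrib_left, hNS1, hNS2]
  refine ⟨hS1ne.inl, ?_, ?_, ?_⟩
  · rintro x (hx | hx)
    · exact ⟨hW1W (hS1sub hx).1, (hS1sub hx).2⟩
    · exact ⟨hW2W (hS2sub hx).1, (hS2sub hx).2⟩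
  · have e1 : S1 ∩ (B t ∩ TG.L) = Q := by rw [hB1]; exact hQ1
    have e2 : S2 ∩ (B t ∩ TG.L) = Q := by rw [hB2]; exact hQ2
    rw [Set.union_inter_distrib_right, e1, e2, Set.union_self]
  · rw [← hR1, ← hR2]
    ext c
    by_cases hcR : c ∈ TG.R
    swap
    · simp [GammaLoc, GammaBag, Set.mem_symmDiff, hcR]
    by_cases hc1' : c ∈ W1 <;> by_cases hc2' : c ∈ W2
    · have hcB : c ∈ B t := hsep c hc1' hc2'
      have hcW : c ∈ W := hW1W hc1'
      have hkey := Set.ncard_union_add_ncard_inter (TG.G.neighborSet c ∩ W1 ∩ S1)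
        (TG.G.neighborSet c ∩ W2 ∩ S2) (Set.toFinite _) (Set.toFinite _)
      rw [← hNunion c, ← hNQ c] at hkey
      simp only [GammaLoc, GammaBag, Set.mem_symmDiff, Set.mem_setOf_eq,
        Set.mem_inter_iff, hcR, hc1', hc2', hcB, hcW, true_and, and_true,
        Nat.odd_iff]
      omega
    · have hcB : c ∉ B t := fun h => hc2' (hBtW2 h)
      have hcW : c ∈ W := hW1W hc1'
      have hU : TG.G.neighborSet c ∩ W ∩ (S1 ∪ S2) = TG.G.neighborSet c ∩ W1 ∩ S1 := by
        rw [hNunion c]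
        apply Set.union_eq_self_of_subset_right
        rintro v ⟨⟨hn, hw2⟩, hs2⟩
        by_cases hvB : v ∈ B t
        · have hvQ : v ∈ Q := by rw [← hQ2]; exact ⟨hs2, hB2 ▸ hvB, (hS2sub hs2).2⟩
          exact ⟨⟨hn, (hS1sub (hQsub1 hvQ)).1⟩, hQsub1 hvQ⟩
        · exact (hsepE c v hn hc1' hcB (hS2sub hs2).1 hvB).elim
      simp only [GammaLoc, GammaBag, Set.mem_symmDiff, Set.mem_setOf_eq,
        Set.mem_inter_iff, hcR, hc1', hc2', hcB, hcW, hU, true_and, and_true]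
      tauto
    · have hcB : c ∉ B t := fun h => hc1' (hBtW1 h)
      have hcW : c ∈ W := hW2W hc2'
      have hU : TG.G.neighborSet c ∩ W ∩ (S1 ∪ S2) = TG.G.neighborSet c ∩ W2 ∩ S2 := by
        rw [hNunion c]
        apply Set.union_eq_self_of_subset_left
        rintro v ⟨⟨hn, hw1⟩, hs1⟩
        by_cases hvB : v ∈ B t
        · have hvQ : v ∈ Q := by rw [← hQ1]; exact ⟨hs1, hB1 ▸ hvB, (hS1sub hs1).2⟩
          exact ⟨⟨hn, (hS2sub (hQsub2 hvQ)).1⟩, hQsub2 hvQ⟩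
        · have hadj : TG.G.Adj c v := hn
          exact (hsepE v c hadj.symm (hS1sub hs1).1 hvB hc2' hcB).elim
      simp only [GammaLoc, GammaBag, Set.mem_symmDiff, Set.mem_setOf_eq,
        Set.mem_inter_iff, hcR, hc1', hc2', hcB, hcW, hU, true_and, and_true]
      tauto
    · have hcW : c ∉ W := fun h => (hWsub h).elim hc1' hc2'
      have hcB : c ∉ B t := fun h => hc1' (hBtW1 h)
      simp [GammaLoc, GammaBag, Set.mem_symmDiff, hc1', hc2', hcW, hcB]
end

section
/- Let G be a Tanner graph with a rooted tree decomposition, and let t be a forget node with single child t' forgetting a variable node v, i.e. B_t = B_{t'} \ {v} with v ∈ B_{t'} ∩ L. Then for every R' ⊆ B_t^c and Q ⊆ B_t^v, a set S is a trapping set with parameters (R',Q) in G_t if and only if S is a trapping set with parameters (R',Q) in G_{t'} or S is a trapping set with parameters (R',Q ∪ {v}) in G_{t'}; moreover these two alternatives are mutually exclusive. -/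
open SimpleGraph Walk in
lemma subVerts_eq_of_forget {V ι : Type*} {G : SimpleGraph V}
    {T : SimpleGraph ι} {root : ι} {B : ι → Set V}
    (hD : IsRootedTreeDecomp G T root B)
    {t t' : ι} (hchild : IsChildOf T root t' t)
    (honly : ∀ s, IsChildOf T root s t → s = t')
    (hsub : B t ⊆ B t') :
    subVerts T root B t = subVerts T root B t' := by
  classical
  ext x
  constructor
  · rintro ⟨i, ⟨p, hp, ht⟩, hx⟩
    by_cases hit : i = t
    · subst hit
      obtain ⟨q, hq, -⟩ := hD.isTree.existsUnique_path root t'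
      exact ⟨t', ⟨q, hq, q.end_mem_support⟩, hsub hx⟩
    · -- i ≠ t; the vertex after t on p is a child of t, hence t'
      have hspec := p.take_spec ht
      cases hq2 : p.dropUntil t ht with
      | nil => exact absurd rfl hit
      | @cons _ s _ hadj q' =>
        have hsq : s ∈ (p.dropUntil t ht).support := by rw [hq2]; simp
        have hsp : s ∈ p.support := p.support_dropUntil_subset ht hsq
        have hnodup : p.support.Nodup := hp.support_nodup
        have hsupp : p.support
            = (p.takeUntil t ht).support ++ (p.dropUntil t ht).support.tail := by
          rw [← SimpleGraph.Walk.support_append, hspec]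
        have hsq' : s ∈ (p.dropUntil t ht).support.tail := by rw [hq2]; simp
        have hsnpt : s ∉ (p.takeUntil t ht).support := by
          rw [hsupp] at hnodup
          exact fun hmem => (List.disjoint_of_nodup_append hnodup) hmem hsq'
        have hptpath : (p.takeUntil t ht).IsPath := hp.takeUntil ht
        have hr2 : ((p.takeUntil t ht).concat hadj).IsPath := by
          rw [SimpleGraph.Walk.isPath_def, SimpleGraph.Walk.support_concat]
          simp only [List.concat_eq_append, List.nodup_append,
            List.nodup_cons, List.not_mem_nil, not_false_iff, List.nodup_nil,
            and_true, true_and]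
          refine ⟨hptpath.support_nodup, ?_⟩
          intro a ha b hb
          simp only [List.mem_singleton, List.mem_cons, List.not_mem_nil,
            or_false] at hb
          subst hb; exact fun h => hsnpt (h ▸ ha)
        have htr2 : t ∈ ((p.takeUntil t ht).concat hadj).support := by
          rw [SimpleGraph.Walk.support_concat]
          simp only [List.concat_eq_append, List.mem_append]
          exact Or.inl (p.takeUntil t ht).end_mem_support
        have hdesc : Desc T root t s := ⟨(p.takeUntil t ht).concat hadj, hr2, htr2⟩
        have hst' : s = t' := honly s ⟨hadj, hdesc⟩
        subst hst'
        exact ⟨i, ⟨p, hp, hsp⟩, hx⟩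
  · rintro ⟨i, ⟨p, hp, ht'⟩, hx⟩
    obtain ⟨q, hq, htq⟩ := hchild.2
    have huniq := (hD.isTree.existsUnique_path root t').unique hq (hp.takeUntil ht')
    have : t ∈ (p.takeUntil t' ht').support := huniq ▸ htq
    exact ⟨i, ⟨p, hp, p.support_takeUntil_subset ht' this⟩, hx⟩

/-- forget-variable-node rule. -/
theorem stmt_11 {V ι : Type*} [Fintype V] [Fintype ι]
    (TG : TannerGraph V) (T : SimpleGraph ι) (root : ι) (B : ι → Set V)
    (hD : IsRootedTreeDecomp TG.G T root B)
    (t t' : ι) (hchild : IsChildOf T root t' t)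
    (honly : ∀ s, IsChildOf T root s t → s = t')
    (v : V) (hv : v ∈ B t' ∩ TG.L) (hBt : B t = B t' \ {v})
    (R' Q : Set V) (hR' : R' ⊆ B t ∩ TG.R) (hQ : Q ⊆ B t ∩ TG.L)
    (S : Set V) :
    (HasParams TG (subVerts T root B t) (B t) S R' Q ↔
      (HasParams TG (subVerts T root B t') (B t') S R' Q ∨
       HasParams TG (subVerts T root B t') (B t') S R' (Q ∪ {v}))) ∧
    ¬ (HasParams TG (subVerts T root B t') (B t') S R' Q ∧
       HasParams TG (subVerts T root B t') (B t') S R' (Q ∪ {v})) := by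
  have hvL : v ∈ TG.L := hv.2
  have hvB' : v ∈ B t' := hv.1
  have hvt : v ∉ B t := by rw [hBt]; simp
  have hvQ : v ∉ Q := fun h => hvt (hQ h).1
  have hW : subVerts T root B t = subVerts T root B t' :=
    subVerts_eq_of_forget hD hchild honly (by rw [hBt]; exact Set.diff_subset)
  have hBL : B t' ∩ TG.L = (B t ∩ TG.L) ∪ {v} := by
    rw [hBt]
    ext a
    by_cases ha : a = v <;> simp [ha, hvB', hvL]
  have factA : ∀ S : Set V, v ∈ S →
      S ∩ (B t' ∩ TG.L) = (S ∩ (B t ∩ TG.L)) ∪ {v} := by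
    intro S hvS
    rw [hBL, Set.inter_union_distrib_left]
    congr 1
    ext a
    simp only [Set.mem_inter_iff, Set.mem_singleton_iff]
    exact ⟨fun h => h.2, fun h => ⟨h ▸ hvS, h⟩⟩
  have factB : ∀ S : Set V, v ∉ S →
      S ∩ (B t' ∩ TG.L) = S ∩ (B t ∩ TG.L) := by
    intro S hvS
    rw [hBL, Set.inter_union_distrib_left]
    have : S ∩ {v} = (∅ : Set V) := by
      ext a
      simp only [Set.mem_inter_iff, Set.mem_singleton_iff, Set.mem_empty_iff_false,
        iff_false, not_and]
      rintro ha rfl; exact hvS ha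
    rw [this, Set.union_empty]
  constructor
  · constructor
    · rintro ⟨h1, h2, h3, h4⟩
      rw [hW] at h2 h4
      by_cases hvS : v ∈ S
      · exact Or.inr ⟨h1, h2, by rw [factA S hvS, h3], h4⟩
      · exact Or.inl ⟨h1, h2, by rw [factB S hvS, h3], h4⟩
    · rintro (⟨h1, h2, h3, h4⟩ | ⟨h1, h2, h3, h4⟩) <;> rw [← hW] at h2 h4
      · have hvS : v ∉ S := by
          intro hvS
          have : v ∈ Q := h3 ▸ ⟨hvS, hvB', hvL⟩
          exact hvQ this
        exact ⟨h1, h2, by rw [← factB S hvS, h3], h4⟩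
      · have hvS : v ∈ S := by
          have : v ∈ S ∩ (B t' ∩ TG.L) := h3 ▸ Or.inr rfl
          exact this.1
        refine ⟨h1, h2, ?_, h4⟩
        have key : (S ∩ (B t ∩ TG.L)) ∪ {v} = Q ∪ {v} := by
          rw [← factA S hvS, h3]
        ext a
        by_cases ha : a = v
        · subst ha
          simp only [Set.mem_inter_iff]
          constructor
          · rintro ⟨-, hmem, -⟩; exact absurd hmem hvt
          · intro h; exact absurd h hvQ
        · have := Set.ext_iff.mp key a
          simpa [ha] using this
  · rintro ⟨⟨_, _, h3a, _⟩, ⟨_, _, h3b, _⟩⟩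
    have : v ∈ Q := (h3a.symm.trans h3b) ▸ Or.inr rfl
    exact hvQ this
end

section
/- Let G be a Tanner graph with a rooted tree decomposition, and let t be a forget node with single child t' forgetting a check node c, i.e. B_t = B_{t'} \ {c} with c ∈ B_{t'} ∩ R. Then for every I ⊆ B_t^c, Q ⊆ B_t^v, and integer d ≥ 0, a set S is a trapping set with extended parameters (I,Q,d) in G_t if and only if either S is a trapping set with extended parameters (I,Q,d) in G_{t'}, or d ≥ 1 and S is a trapping set with extended parameters (I ∪ {c}, Q, d−1) in G_{t'}; moreover these two alternatives are mutually exclusive. -/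
lemma subVerts_eq {V ι : Type*} {T : SimpleGraph ι} (hT : T.IsTree) (root : ι)
    (B : ι → Set V) {t t' : ι} (hchild : IsChildOf T root t' t)
    (honly : ∀ s, IsChildOf T root s t → s = t')
    (hBsub : B t ⊆ B t') :
    subVerts T root B t = subVerts T root B t' := by
  classical
  obtain ⟨hadj, p₀, hp₀, htp₀⟩ := hchild
  ext v
  constructor
  · rintro ⟨i, ⟨p, hp, htp⟩, hv⟩
    by_cases hit : i = t
    · subst hit
      exact ⟨t', ⟨p₀, hp₀, p₀.end_mem_support⟩, hBsub hv⟩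
    · -- show t' ∈ p.support
      have hspec := p.take_spec htp
      obtain ⟨s, h, q', hq2⟩ := SimpleGraph.Walk.not_nil_iff.mp
        (SimpleGraph.Walk.not_nil_of_ne (fun he => hit he.symm) (p := p.dropUntil t htp))
      set q := p.dropUntil t htp with hq
      have hsq : s ∈ q.support := by
        rw [hq2]; simp [SimpleGraph.Walk.support_cons]
      have hsp : s ∈ p.support := p.support_dropUntil_subset htp hsq
      have hnodup : p.support.Nodup := hp.support_nodup
      have hsupp : p.support = (p.takeUntil t htp).support ++ q.support.tail := by
        conv_lhs => rw [← hspec]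
        rw [SimpleGraph.Walk.support_append]
      have hsnot : s ∉ (p.takeUntil t htp).support := by
        have htail : s ∈ q.support.tail := by
          rw [hq2]; simp [SimpleGraph.Walk.support_cons]
        rw [hsupp] at hnodup
        exact fun hmem => (List.disjoint_of_nodup_append hnodup) hmem htail
      have hr : ((p.takeUntil t htp).concat h).IsPath := by
        rw [SimpleGraph.Walk.isPath_def, SimpleGraph.Walk.support_concat,
          List.nodup_append]
        refine ⟨(hp.takeUntil htp).support_nodup, List.nodup_singleton s, ?_⟩
        rintro a ha b hb
        rw [List.mem_singleton] at hb
        subst hb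
        exact fun he => hsnot (he ▸ ha)
      have hdesc : Desc T root t s :=
        ⟨(p.takeUntil t htp).concat h, hr, by
          rw [SimpleGraph.Walk.support_concat]
          exact List.mem_append_left _ ((p.takeUntil t htp).end_mem_support)⟩
      have hst' : s = t' := honly s ⟨h, hdesc⟩
      exact ⟨i, ⟨p, hp, hst' ▸ hsp⟩, hv⟩
  · rintro ⟨i, ⟨p, hp, htp⟩, hv⟩
    -- takeUntil t' of p is the unique path root → t', which contains t
    have huniq := hT.existsUnique_path root t'
    obtain ⟨q₀, hq₀, hq₀u⟩ := huniq
    have h1 : p.takeUntil t' htp = q₀ := hq₀u _ (hp.takeUntil htp)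
    have h2 : p₀ = q₀ := hq₀u _ hp₀
    have htmem : t ∈ (p.takeUntil t' htp).support := by
      rw [h1, ← h2]; exact htp₀
    exact ⟨i, ⟨p, hp, p.support_takeUntil_subset htp htmem⟩, hv⟩


lemma key_set {V : Type*} [Fintype V] (A K I : Set V) (c : V) (hcK : c ∈ K)
    (hI : I ⊆ K \ {c}) (d : ℕ) :
    ((A ∩ (K \ {c}) = I ∧ (A \ (K \ {c})).ncard = d) ↔
      ((A ∩ K = I ∧ (A \ K).ncard = d) ∨
       (1 ≤ d ∧ A ∩ K = I ∪ {c} ∧ (A \ K).ncard = d - 1))) ∧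
    ¬ ((A ∩ K = I) ∧ (A ∩ K = I ∪ {c})) := by
  have hcI : c ∉ I := fun h => (hI h).2 rfl
  constructor
  · by_cases hcA : c ∈ A
    · have e1 : A ∩ (K \ {c}) = (A ∩ K) \ {c} := by ext x; simp; tauto
      have e2 : A \ (K \ {c}) = insert c (A \ K) := by
        ext x
        by_cases hx : x = c <;> simp [hx, hcA, hcK] <;> tauto
      have e3 : c ∉ A \ K := fun h => h.2 hcK
      have e4 : (insert c (A \ K)).ncard = (A \ K).ncard + 1 :=
        Set.ncard_insert_of_notMem e3 (Set.toFinite _)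
      rw [e1, e2, e4]
      constructor
      · rintro ⟨h1, h2⟩
        right
        refine ⟨by omega, ?_, by omega⟩
        rw [← h1]
        ext x
        by_cases hx : x = c <;> simp [hx, hcA, hcK] <;> tauto
      · rintro (⟨h1, h2⟩ | ⟨hd, h1, h2⟩)
        · exact absurd (h1 ▸ ⟨hcA, hcK⟩) hcI
        · constructor
          · rw [h1]; ext x; by_cases hx : x = c <;> simp [hx, hcI] <;> tauto
          · omega
    · have e1 : A ∩ (K \ {c}) = A ∩ K := by
        ext x
        simp only [Set.mem_inter_iff, Set.mem_diff, Set.mem_singleton_iff]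
        constructor
        · rintro ⟨hx, hk, _⟩; exact ⟨hx, hk⟩
        · rintro ⟨hx, hk⟩; exact ⟨hx, hk, fun he => hcA (he ▸ hx)⟩
      have e2 : A \ (K \ {c}) = A \ K := by
        ext x
        simp only [Set.mem_diff, Set.mem_singleton_iff, not_and, not_not]
        constructor
        · rintro ⟨hx, h⟩; exact ⟨hx, fun hk => hcA ((h hk) ▸ hx)⟩
        · rintro ⟨hx, h⟩; exact ⟨hx, fun hk => absurd hk h⟩
      rw [e1, e2]
      constructor
      · intro h; left; exact h
      · rintro (h | ⟨hd, h1, h2⟩)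
        · exact h
        · exact absurd (h1 ▸ (Set.mem_union_right _ rfl : c ∈ I ∪ {c})).1 hcA
  · rintro ⟨h1, h2⟩
    have : c ∈ I := h1 ▸ (h2 ▸ (Set.mem_union_right _ rfl : c ∈ I ∪ {c}))
    exact hcI this


/-- forget-check-node rule for extended parameters. -/
theorem stmt_15 {V ι : Type*} [Fintype V] [Fintype ι]
    (TG : TannerGraph V) (T : SimpleGraph ι) (root : ι) (B : ι → Set V)
    (hD : IsRootedTreeDecomp TG.G T root B)
    (t t' : ι) (hchild : IsChildOf T root t' t)
    (honly : ∀ s, IsChildOf T root s t → s = t')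
    (c : V) (hc : c ∈ B t' ∩ TG.R) (hBt : B t = B t' \ {c})
    (I Q : Set V) (hI : I ⊆ B t ∩ TG.R) (hQ : Q ⊆ B t ∩ TG.L) (d : ℕ)
    (S : Set V) :
    (HasExtParams TG (subVerts T root B t) (B t) S I Q d ↔
      (HasExtParams TG (subVerts T root B t') (B t') S I Q d ∨
       (1 ≤ d ∧
        HasExtParams TG (subVerts T root B t') (B t') S (I ∪ {c}) Q (d - 1)))) ∧
    ¬ (HasExtParams TG (subVerts T root B t') (B t') S I Q d ∧
       (1 ≤ d ∧
        HasExtParams TG (subVerts T root B t') (B t') S (I ∪ {c}) Q (d - 1))) := by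

  classical
  have hcR : c ∈ TG.R := hc.2
  have hcBt' : c ∈ B t' := hc.1
  have hBsub : B t ⊆ B t' := by rw [hBt]; exact Set.diff_subset
  have hW : subVerts T root B t = subVerts T root B t' :=
    subVerts_eq hD.isTree root B hchild honly hBsub
  have hL : B t ∩ TG.L = B t' ∩ TG.L := by
    have hcL : c ∉ TG.L := fun h => TG.disj.le_bot ⟨h, hcR⟩
    rw [hBt]
    ext x
    simp only [Set.mem_inter_iff, Set.mem_diff, Set.mem_singleton_iff]
    constructor
    · rintro ⟨⟨h1, _⟩, h2⟩; exact ⟨h1, h2⟩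
    · rintro ⟨h1, h2⟩; exact ⟨⟨h1, fun he => hcL (he ▸ h2)⟩, h2⟩
  have hR : B t ∩ TG.R = (B t' ∩ TG.R) \ {c} := by
    rw [hBt]
    ext x
    simp only [Set.mem_inter_iff, Set.mem_diff, Set.mem_singleton_iff]
    tauto
  have hI' : I ⊆ (B t' ∩ TG.R) \ {c} := hR ▸ hI
  have hkey := key_set (GammaLoc TG (subVerts T root B t') S) (B t' ∩ TG.R) I c
    ⟨hcBt', hcR⟩ hI' d
  simp only [HasExtParams, hW, hL, hR]
  constructor
  · constructor
    · rintro ⟨h1, h2, h3, h4, h5⟩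
      rcases hkey.1.mp ⟨h4, h5⟩ with ⟨h4', h5'⟩ | ⟨hd, h4', h5'⟩
      · exact Or.inl ⟨h1, h2, h3, h4', h5'⟩
      · exact Or.inr ⟨hd, h1, h2, h3, h4', h5'⟩
    · rintro (⟨h1, h2, h3, h4, h5⟩ | ⟨hd, h1, h2, h3, h4, h5⟩)
      · obtain ⟨h4', h5'⟩ := hkey.1.mpr (Or.inl ⟨h4, h5⟩)
        exact ⟨h1, h2, h3, h4', h5'⟩
      · obtain ⟨h4', h5'⟩ := hkey.1.mpr (Or.inr ⟨hd, h4, h5⟩)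
        exact ⟨h1, h2, h3, h4', h5'⟩
  · rintro ⟨⟨_, _, _, h4, _⟩, _, _, _, _, h4', _⟩
    exact hkey.2 ⟨h4, h4'⟩
end

section
/- Let G be a Tanner graph with a rooted tree decomposition, let t be a join node with children t1 and t2 (B_t = B_{t1} = B_{t2}), and fix R' ⊆ B_t^c and a nonempty Q ⊆ B_t^v. Then the map (S_{t1}, S_{t2}) ↦ S_{t1} ∪ S_{t2} is a bijection from the set of pairs (S_{t1}, S_{t2}) such that, for some R_{t1}, R_{t2} with R_{t1} ⊕ R_{t2} ⊕ Γ_o(G_t[Q ∪ B_t^c]) = R', S_{t1} is a trapping set with parameters (R_{t1},Q) in G_{t1} and S_{t2} is a trapping set with parameters (R_{t2},Q) in G_{t2}, onto the set of trapping sets with parameters (R',Q) in G_t; moreover every such pair satisfies |S_{t1} ∪ S_{t2}| = |S_{t1}| + |S_{t2}| − |Q|. -/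
namespace Stmt16Aux
open SimpleGraph Walk

set_option linter.unusedSectionVars false

variable {ι : Type*} [DecidableEq ι] {T : SimpleGraph ι} {root : ι}

lemma path_unique (hT : T.IsTree) {u v : ι} {p q : T.Walk u v} (hp : p.IsPath) (hq : q.IsPath) :
    p = q :=
  ((hT.existsUnique_path u v).unique hp hq)

lemma desc_iff (hT : T.IsTree) {t i : ι} {p : T.Walk root i} (hp : p.IsPath) :
    Desc T root t i ↔ t ∈ p.support := by
  constructor
  · rintro ⟨q, hq, ht⟩; rwa [path_unique hT hq hp] at ht
  · exact fun h => ⟨p, hp, h⟩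

lemma desc_self (hT : T.IsTree) (t : ι) : Desc T root t t := by
  obtain ⟨w⟩ := hT.isConnected.preconnected root t
  exact ⟨w.toPath, w.toPath.2, Walk.end_mem_support _⟩

lemma desc_trans (hT : T.IsTree) {a b c : ι} (hab : Desc T root a b) (hbc : Desc T root b c) :
    Desc T root a c := by
  obtain ⟨p, hp, hb⟩ := hbc
  refine ⟨p, hp, ?_⟩
  have := (desc_iff hT (hp.takeUntil hb)).mp hab
  exact p.support_takeUntil_subset hb this

lemma adj_desc (hT : T.IsTree) {a b : ι} (hab : T.Adj a b) :
    Desc T root a b ∨ Desc T root b a := by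
  obtain ⟨w⟩ := hT.isConnected.preconnected root a
  set p : T.Walk root a := w.toPath.1 with hpdef
  have hp : p.IsPath := w.toPath.2
  by_cases hb : b ∈ p.support
  · exact Or.inr ⟨p, hp, hb⟩
  · left
    refine ⟨p.concat hab, ?_, ?_⟩
    · rw [Walk.isPath_def, Walk.support_concat]
      rw [List.nodup_append]
      exact ⟨hp.support_nodup, List.nodup_singleton b,
        by intro x hx y hy hxy; simp at hy; subst hy; subst hxy; exact hb hx⟩
    · rw [Walk.support_concat]
      exact List.mem_append_left _ (Walk.end_mem_support p)

lemma support_decomp {u v : ι} {p : T.Walk root v} (hp : p.IsPath) (h : u ∈ p.support) :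
    p.support = (p.takeUntil u h).support ++ (p.dropUntil u h).support.tail := by
  conv_lhs => rw [← p.take_spec h]
  rw [Walk.support_append]

lemma desc_antisymm (hT : T.IsTree) {a b : ι} (hab : Desc T root a b) (hba : Desc T root b a) :
    a = b := by
  by_contra hne
  obtain ⟨p, hp, ha⟩ := hab
  have hb : b ∈ (p.takeUntil a ha).support := (desc_iff hT (hp.takeUntil ha)).mp hba
  have hbtail : b ∈ (p.dropUntil a ha).support.tail := by
    have hbs : b ∈ (p.dropUntil a ha).support := Walk.end_mem_support _
    rw [(p.dropUntil a ha).support_eq_cons, List.mem_cons] at hbs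
    rcases hbs with hbs | hbs
    · exact absurd hbs.symm hne
    · exact hbs
  have hnd := hp.support_nodup
  rw [support_decomp hp ha, List.nodup_append] at hnd
  exact hnd.2.2 b hb b hbtail rfl

lemma child_step (hT : T.IsTree) {t i : ι} (h : Desc T root t i) (hne : t ≠ i) :
    ∃ s, IsChildOf T root s t ∧ Desc T root s i := by
  obtain ⟨p, hp, ht⟩ := h
  have hdrop : (p.dropUntil t ht).IsPath := hp.dropUntil ht
  cases hd : p.dropUntil t ht with
  | nil => exact absurd rfl hne
  | @cons _ s _ h' rest =>
    have hs : s ∈ p.support := by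
      apply p.support_dropUntil_subset ht
      rw [hd]; simp
    have hstail : s ∈ (p.dropUntil t ht).support.tail := by
      rw [hd]; simp
    have hts : Desc T root t s := by
      rcases adj_desc hT h' with h1 | h1
      · exact h1
      · exfalso
        have hstake : s ∈ (p.takeUntil t ht).support := (desc_iff hT (hp.takeUntil ht)).mp h1
        have hnd := hp.support_nodup
        rw [support_decomp hp ht, List.nodup_append] at hnd
        exact hnd.2.2 s hstake s hstail rfl
    exact ⟨s, ⟨h', hts⟩, ⟨p, hp, hs⟩⟩

lemma crossing (hT : T.IsTree) {a b s : ι} (hab : T.Adj a b) (hsa : Desc T root s a)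
    (hsb : ¬ Desc T root s b) : s = a := by
  rcases adj_desc hT hab with h1 | h1
  · exact absurd (desc_trans hT hsa h1) hsb
  · -- b is on the path root → a
    obtain ⟨p, hp, hs⟩ := hsa
    have hb : b ∈ p.support := (desc_iff hT hp).mp h1
    have hstail : s ∈ (p.dropUntil b hb).support.tail := by
      have : s ∈ (p.takeUntil b hb).support ∨ s ∈ (p.dropUntil b hb).support.tail := by
        have := support_decomp hp hb
        rw [this, List.mem_append] at hs; exact hs
      rcases this with h2 | h2
      · exact absurd ((desc_iff hT (hp.takeUntil hb)).mpr h2) hsb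
      · exact h2
    have hdp : (p.dropUntil b hb).IsPath := hp.dropUntil hb
    have hedge : (Walk.cons hab.symm Walk.nil : T.Walk b a).IsPath := by simp [hab.ne']
    have := path_unique hT hdp hedge
    rw [this] at hstail
    simpa using hstail

lemma comp_on_path (hT : T.IsTree) {k x y : ι} {p : T.Walk root k} (hp : p.IsPath)
    (hx : x ∈ p.support) (hy : y ∈ p.support) :
    Desc T root x y ∨ Desc T root y x := by
  by_cases hxt : x ∈ (p.takeUntil y hy).support
  · exact Or.inl ((desc_iff hT (hp.takeUntil hy)).mpr hxt)
  · right
    have hxd : x ∈ (p.dropUntil y hy).support := by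
      have := support_decomp hp hy
      rw [this, List.mem_append] at hx
      rcases hx with h | h
      · exact absurd h hxt
      · exact List.mem_of_mem_tail h
    set drop := p.dropUntil y hy with hdropdef
    have hdp : drop.IsPath := hp.dropUntil hy
    set q := (p.takeUntil y hy).append (drop.takeUntil x hxd) with hqdef
    have hnd := hp.support_nodup
    rw [support_decomp hp hy, List.nodup_append] at hnd
    have htail_sub : ∀ z ∈ ((drop.takeUntil x hxd).support).tail, z ∈ drop.support.tail := by
      intro z hz
      have hz1 : z ∈ (drop.takeUntil x hxd).support := List.mem_of_mem_tail hz
      have hz2 : z ∈ drop.support := drop.support_takeUntil_subset hxd hz1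
      have hzy : z ≠ y := by
        have hnd2 := (hdp.takeUntil hxd).support_nodup
        rw [(drop.takeUntil x hxd).support_eq_cons, List.nodup_cons] at hnd2
        intro h; subst h; exact hnd2.1 hz
      rw [drop.support_eq_cons, List.mem_cons] at hz2
      rcases hz2 with h | h
      · exact absurd h hzy
      · exact h
    have hq : q.IsPath := by
      rw [Walk.isPath_def, Walk.support_append, List.nodup_append]
      exact ⟨(hp.takeUntil hy).support_nodup,
        (List.tail_sublist _).nodup ((hdp.takeUntil hxd).support_nodup),
        fun z hz1 w hz2 hzw => hnd.2.2 z hz1 w (htail_sub w hz2) hzw⟩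
    have hyq : y ∈ q.support := by
      rw [Walk.support_append]
      exact List.mem_append_left _ (Walk.end_mem_support _)
    exact ⟨q, hq, hyq⟩

end Stmt16Aux

namespace Stmt16Aux
open SimpleGraph Walk

variable {ι : Type*} [DecidableEq ι] {T : SimpleGraph ι} {root : ι}

lemma no_desc_sibling (hT : T.IsTree) {t t1 t2 : ι} (hc1 : IsChildOf T root t1 t)
    (hc2 : IsChildOf T root t2 t) (hne : t1 ≠ t2) : ¬ Desc T root t1 t2 := by
  intro h
  obtain ⟨p, hp, h1⟩ := h
  have ht : t ∈ p.support := (desc_iff hT hp).mp hc2.2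
  have hdp : (p.dropUntil t ht).IsPath := hp.dropUntil ht
  have hedge : (Walk.cons hc2.1 Walk.nil : T.Walk t t2).IsPath := by simp [hc2.1.ne]
  have hde := path_unique hT hdp hedge
  have hsupp : p.support = (p.takeUntil t ht).support ++ [t2] := by
    rw [support_decomp hp ht, hde]; rfl
  rw [hsupp, List.mem_append] at h1
  rcases h1 with h1 | h1
  · have : Desc T root t1 t := (desc_iff hT (hp.takeUntil ht)).mpr h1
    have := desc_antisymm hT this hc1.2
    exact hc1.1.ne' this
  · simp at h1; exact hne h1

lemma sibling_disjoint (hT : T.IsTree) {t t1 t2 k : ι} (hc1 : IsChildOf T root t1 t)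
    (hc2 : IsChildOf T root t2 t) (hne : t1 ≠ t2) (h1 : Desc T root t1 k)
    (h2 : Desc T root t2 k) : False := by
  obtain ⟨p, hp, hs1⟩ := h1
  have hs2 : t2 ∈ p.support := (desc_iff hT hp).mp h2
  rcases comp_on_path hT hp hs1 hs2 with h | h
  · exact no_desc_sibling hT hc1 hc2 hne h
  · exact no_desc_sibling hT hc2 hc1 hne.symm h

lemma exists_cross {s : Set ι} {P : ι → Prop} :
    ∀ {x y : s}, (T.induce s).Walk x y → P x → ¬ P y →
      ∃ a b : ι, a ∈ s ∧ b ∈ s ∧ T.Adj a b ∧ P a ∧ ¬ P b := by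
  intro x y w
  induction w with
  | nil => intro hx hy; exact absurd hx hy
  | @cons x z y h w ih =>
    intro hx hy
    by_cases hz : P z
    · exact ih hz hy
    · exact ⟨x, z, x.2, z.2, h, hx, hz⟩

end Stmt16Aux

namespace Stmt16Aux
open SimpleGraph Walk

set_option linter.unusedSectionVars false

variable {V ι : Type*} [DecidableEq ι] {T : SimpleGraph ι} {root : ι} {B : ι → Set V}

lemma bag_stays {G : SimpleGraph V} (hD : IsRootedTreeDecomp G T root B) {s t : ι}
    (hcs : IsChildOf T root s t) (hBs : B s = B t) {v : V} {i k : ι}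
    (hi : Desc T root s i) (hvi : v ∈ B i) (hvk : v ∈ B k) (hvt : v ∉ B t) :
    Desc T root s k := by
  have hT := hD.isTree
  by_contra hk
  obtain ⟨w⟩ := (hD.connBags v).preconnected ⟨i, hvi⟩ ⟨k, hvk⟩
  obtain ⟨a, b, ha, hb, hadj, hPa, hPb⟩ := exists_cross (P := Desc T root s) w hi hk
  have := crossing hT hadj hPa hPb
  subst this
  have hvb : v ∈ B s := ha
  rw [hBs] at hvb
  exact hvt hvb

lemma subVerts_inter {G : SimpleGraph V} (hD : IsRootedTreeDecomp G T root B) {t t1 t2 : ι}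
    (hc1 : IsChildOf T root t1 t) (hc2 : IsChildOf T root t2 t) (hne : t1 ≠ t2)
    (hB1 : B t = B t1) (hB2 : B t = B t2) :
    subVerts T root B t1 ∩ subVerts T root B t2 ⊆ B t := by
  rintro v ⟨⟨i, h1i, hvi⟩, ⟨j, h2j, hvj⟩⟩
  by_contra hvt
  have hd1j : Desc T root t1 j := bag_stays hD hc1 hB1.symm h1i hvi hvj hvt
  exact sibling_disjoint hD.isTree hc1 hc2 hne hd1j h2j

lemma subVerts_union {G : SimpleGraph V} (hD : IsRootedTreeDecomp G T root B) {t t1 t2 : ι}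
    (hc1 : IsChildOf T root t1 t) (hc2 : IsChildOf T root t2 t)
    (honly : ∀ s, IsChildOf T root s t → s = t1 ∨ s = t2) (hB1 : B t = B t1) :
    subVerts T root B t = subVerts T root B t1 ∪ subVerts T root B t2 := by
  have hT := hD.isTree
  apply Set.eq_of_subset_of_subset
  · rintro v ⟨i, hti, hvi⟩
    by_cases hit : i = t
    · subst hit
      left
      exact ⟨t1, desc_self hT t1, hB1 ▸ hvi⟩
    · obtain ⟨s, hcs, hsi⟩ := child_step hT hti (Ne.symm hit)
      rcases honly s hcs with rfl | rfl
      · exact Or.inl ⟨i, hsi, hvi⟩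
      · exact Or.inr ⟨i, hsi, hvi⟩
  · rintro v (⟨i, hsi, hvi⟩ | ⟨i, hsi, hvi⟩)
    · exact ⟨i, desc_trans hT hc1.2 hsi, hvi⟩
    · exact ⟨i, desc_trans hT hc2.2 hsi, hvi⟩

lemma subVerts_bag_sub {t1 : ι} (hT : T.IsTree) : B t1 ⊆ subVerts T root B t1 :=
  fun v hv => ⟨t1, desc_self hT t1, hv⟩

lemma no_cross_edge {G : SimpleGraph V} (hD : IsRootedTreeDecomp G T root B) {t t1 t2 : ι}
    (hc1 : IsChildOf T root t1 t) (hc2 : IsChildOf T root t2 t) (hne : t1 ≠ t2)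
    (hB1 : B t = B t1) (hB2 : B t = B t2) {c v : V}
    (hc : c ∈ subVerts T root B t1) (hcB : c ∉ B t) (hv : v ∈ subVerts T root B t2)
    (hadj : G.Adj c v) : v ∈ B t := by
  obtain ⟨k, hck, hvk⟩ := hD.coversEdge hadj
  obtain ⟨i, h1i, hci⟩ := hc
  have h1k : Desc T root t1 k := bag_stays hD hc1 hB1.symm h1i hci hck hcB
  exact subVerts_inter hD hc1 hc2 hne hB1 hB2 ⟨⟨k, h1k, hvk⟩, hv⟩

end Stmt16Aux

namespace Stmt16Aux
open SimpleGraph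

variable {V : Type*}

lemma gammaLoc_eq' (TG : TannerGraph V) {W S : Set V} (h : S ⊆ W) :
    GammaLoc TG W S =
      {c | c ∈ TG.R ∧ c ∈ W ∧ Odd ((TG.G.neighborSet c ∩ S).ncard)} := by
  unfold GammaLoc
  ext c
  rw [Set.mem_setOf_eq, Set.mem_setOf_eq, Set.inter_assoc,
    Set.inter_eq_self_of_subset_right h]

lemma gammaBag_eq' (TG : TannerGraph V) {W Bt Q : Set V} (h : Q ⊆ W) :
    GammaBag TG W Bt Q =
      {c | c ∈ Bt ∩ TG.R ∧ Odd ((TG.G.neighborSet c ∩ Q).ncard)} := by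
  unfold GammaBag
  ext c
  rw [Set.mem_setOf_eq, Set.mem_setOf_eq, Set.inter_assoc,
    Set.inter_eq_self_of_subset_right h]

lemma inter_eq_Q {TG : TannerGraph V} {W1 W2 Bt Q S1 S2 : Set V}
    (hS1 : S1 ⊆ W1 ∩ TG.L) (hS2 : S2 ⊆ W2 ∩ TG.L)
    (hQ1 : S1 ∩ (Bt ∩ TG.L) = Q) (hQ2 : S2 ∩ (Bt ∩ TG.L) = Q)
    (hsub : W1 ∩ W2 ⊆ Bt) : S1 ∩ S2 = Q := by
  apply Set.eq_of_subset_of_subset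
  · rintro v ⟨h1, h2⟩
    have hL : v ∈ TG.L := (hS1 h1).2
    have hB : v ∈ Bt := hsub ⟨(hS1 h1).1, (hS2 h2).1⟩
    rw [← hQ1]; exact ⟨h1, hB, hL⟩
  · intro v hv
    constructor
    · rw [← hQ1] at hv; exact hv.1
    · rw [← hQ2] at hv; exact hv.1

lemma gamma_union [Fintype V] (TG : TannerGraph V) {W1 W2 Bt Q S1 S2 : Set V}
    (hS1 : S1 ⊆ W1 ∩ TG.L) (hS2 : S2 ⊆ W2 ∩ TG.L)
    (hQ1 : S1 ∩ (Bt ∩ TG.L) = Q) (hQ2 : S2 ∩ (Bt ∩ TG.L) = Q)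
    (hsub : W1 ∩ W2 ⊆ Bt) (hBt1 : Bt ⊆ W1) (hBt2 : Bt ⊆ W2)
    (hcr12 : ∀ c v, c ∈ W1 → c ∉ Bt → v ∈ W2 → TG.G.Adj c v → v ∈ Bt)
    (hcr21 : ∀ c v, c ∈ W2 → c ∉ Bt → v ∈ W1 → TG.G.Adj c v → v ∈ Bt) :
    GammaLoc TG (W1 ∪ W2) (S1 ∪ S2) =
      symmDiff (symmDiff (GammaLoc TG W1 S1) (GammaLoc TG W2 S2))
        (GammaBag TG (W1 ∪ W2) Bt Q) := by
  have hQ12 : S1 ∩ S2 = Q := inter_eq_Q hS1 hS2 hQ1 hQ2 hsub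
  have hQS1 : Q ⊆ S1 := by rw [← hQ1]; exact Set.inter_subset_left
  have hQS2 : Q ⊆ S2 := by rw [← hQ2]; exact Set.inter_subset_left
  have hS1W : S1 ⊆ W1 := fun v hv => (hS1 hv).1
  have hS2W : S2 ⊆ W2 := fun v hv => (hS2 hv).1
  have hQW : Q ⊆ W1 ∪ W2 := fun v hv => Or.inl (hBt1 (by rw [← hQ1] at hv; exact hv.2.1))
  rw [gammaLoc_eq' TG (show S1 ∪ S2 ⊆ W1 ∪ W2 from Set.union_subset_union hS1W hS2W),
    gammaLoc_eq' TG hS1W, gammaLoc_eq' TG hS2W, gammaBag_eq' TG hQW]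
  ext c
  set N := TG.G.neighborSet c with hN
  have hkey : (N ∩ (S1 ∪ S2)).ncard + (N ∩ Q).ncard = (N ∩ S1).ncard + (N ∩ S2).ncard := by
    have h1 : N ∩ (S1 ∪ S2) = (N ∩ S1) ∪ (N ∩ S2) := Set.inter_union_distrib_left N S1 S2
    have h2 : (N ∩ S1) ∩ (N ∩ S2) = N ∩ Q := by
      rw [← hQ12]; ext v; simp [Set.mem_inter_iff]; tauto
    rw [h1, ← h2]
    exact Set.ncard_union_add_ncard_inter _ _ (Set.toFinite _) (Set.toFinite _)
  simp only [Set.mem_symmDiff, Set.mem_setOf_eq, Set.mem_union, Set.mem_inter_iff]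
  set u := (N ∩ (S1 ∪ S2)).ncard with hu
  set qn := (N ∩ Q).ncard with hqn
  set a1 := (N ∩ S1).ncard with ha1
  set a2 := (N ∩ S2).ncard with ha2
  clear_value u qn a1 a2
  by_cases hR : c ∈ TG.R
  swap
  · tauto
  by_cases hcB : c ∈ Bt
  · have hc1 : c ∈ W1 := hBt1 hcB
    have hc2 : c ∈ W2 := hBt2 hcB
    have hpar : (Odd u ↔ Even qn) ↔ (Odd a1 ↔ Even a2) := by
      rw [← Nat.odd_add, ← Nat.odd_add, hkey]
    rw [Nat.not_odd_iff_even.symm, Nat.not_odd_iff_even.symm] at hpar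
    clear hkey hQ12 hQS1 hQS2 hS1W hS2W hQW hS1 hS2 hQ1 hQ2 hsub hBt1 hBt2 hcr12 hcr21 hu hqn ha1 ha2 hN
    tauto
  · by_cases hc1 : c ∈ W1
    · have hc2 : c ∉ W2 := fun h => hcB (hsub ⟨hc1, h⟩)
      have hNeq : N ∩ (S1 ∪ S2) = N ∩ S1 := by
        apply Set.eq_of_subset_of_subset
        · rintro v ⟨hvN, hv12⟩
          rcases hv12 with hv | hv
          · exact ⟨hvN, hv⟩
          · have hadj : TG.G.Adj c v := hvN
            have hvB : v ∈ Bt := hcr12 c v hc1 hcB (hS2 hv).1 hadj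
            have : v ∈ Q := by rw [← hQ2]; exact ⟨hv, hvB, (hS2 hv).2⟩
            exact ⟨hvN, hQS1 this⟩
        · exact Set.inter_subset_inter_right N Set.subset_union_left
      have hux : u = a1 := by rw [hu, ha1, hNeq]
      subst hux
      clear hkey hQ12 hQS1 hQS2 hS1W hS2W hQW hS1 hS2 hQ1 hQ2 hsub hBt1 hBt2 hcr12 hcr21 hu hqn ha1 ha2 hN hNeq
      tauto
    · by_cases hc2 : c ∈ W2
      · have hNeq : N ∩ (S1 ∪ S2) = N ∩ S2 := by
          apply Set.eq_of_subset_of_subset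
          · rintro v ⟨hvN, hv12⟩
            rcases hv12 with hv | hv
            · have hadj : TG.G.Adj c v := hvN
              have hvB : v ∈ Bt := hcr21 c v hc2 hcB (hS1 hv).1 hadj
              have : v ∈ Q := by rw [← hQ1]; exact ⟨hv, hvB, (hS1 hv).2⟩
              exact ⟨hvN, hQS2 this⟩
            · exact ⟨hvN, hv⟩
          · exact Set.inter_subset_inter_right N Set.subset_union_right
        have hux : u = a2 := by rw [hu, ha2, hNeq]
        subst hux
        clear hkey hQ12 hQS1 hQS2 hS1W hS2W hQW hS1 hS2 hQ1 hQ2 hsub hBt1 hBt2 hcr12 hcr21 hu hqn ha1 ha2 hN hNeq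
        tauto
      · clear hkey hQ12 hQS1 hQS2 hS1W hS2W hQW hS1 hS2 hQ1 hQ2 hsub hBt1 hBt2 hcr12 hcr21 hu hqn ha1 ha2 hN
        tauto

end Stmt16Aux

/-- at a join node, `(S_{t1}, S_{t2}) ↦ S_{t1} ∪ S_{t2}` is a
bijection from compatible pairs onto the trapping sets with parameters
`(R', Q)` in `G_t`, and the sizes add up with overlap `|Q|`. -/
theorem stmt_16 {V ι : Type*} [Fintype V] [Fintype ι]
    (TG : TannerGraph V) (T : SimpleGraph ι) (root : ι) (B : ι → Set V)
    (hD : IsRootedTreeDecomp TG.G T root B)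
    (t t1 t2 : ι)
    (hc1 : IsChildOf T root t1 t) (hc2 : IsChildOf T root t2 t) (hne : t1 ≠ t2)
    (honly : ∀ s, IsChildOf T root s t → s = t1 ∨ s = t2)
    (hB1 : B t = B t1) (hB2 : B t = B t2)
    (R' Q : Set V) (hR' : R' ⊆ B t ∩ TG.R) (hQ : Q ⊆ B t ∩ TG.L)
    (hQne : Q.Nonempty) :
    Set.BijOn (fun p : Set V × Set V => p.1 ∪ p.2)
      {p : Set V × Set V | ∃ R1 R2 : Set V,
        symmDiff (symmDiff R1 R2) (GammaBag TG (subVerts T root B t) (B t) Q) = R' ∧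
        HasParams TG (subVerts T root B t1) (B t1) p.1 R1 Q ∧
        HasParams TG (subVerts T root B t2) (B t2) p.2 R2 Q}
      {S : Set V | HasParams TG (subVerts T root B t) (B t) S R' Q} ∧
    ∀ p : Set V × Set V,
      p ∈ {p : Set V × Set V | ∃ R1 R2 : Set V,
        symmDiff (symmDiff R1 R2) (GammaBag TG (subVerts T root B t) (B t) Q) = R' ∧
        HasParams TG (subVerts T root B t1) (B t1) p.1 R1 Q ∧
        HasParams TG (subVerts T root B t2) (B t2) p.2 R2 Q} →
      (p.1 ∪ p.2).ncard = p.1.ncard + p.2.ncard - Q.ncard := by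
  classical
  have hT := hD.isTree
  set W : Set V := subVerts T root B t with hWdef
  set W1 : Set V := subVerts T root B t1 with hW1def
  set W2 : Set V := subVerts T root B t2 with hW2def
  have hUnion : W = W1 ∪ W2 := Stmt16Aux.subVerts_union hD hc1 hc2 honly hB1
  have hInter : W1 ∩ W2 ⊆ B t := Stmt16Aux.subVerts_inter hD hc1 hc2 hne hB1 hB2
  have hBtW1 : B t ⊆ W1 := by rw [hB1]; exact Stmt16Aux.subVerts_bag_sub hT
  have hBtW2 : B t ⊆ W2 := by rw [hB2]; exact Stmt16Aux.subVerts_bag_sub hT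
  have hcr12 : ∀ c v, c ∈ W1 → c ∉ B t → v ∈ W2 → TG.G.Adj c v → v ∈ B t :=
    fun c v h1 h2 h3 h4 => Stmt16Aux.no_cross_edge hD hc1 hc2 hne hB1 hB2 h1 h2 h3 h4
  have hcr21 : ∀ c v, c ∈ W2 → c ∉ B t → v ∈ W1 → TG.G.Adj c v → v ∈ B t :=
    fun c v h1 h2 h3 h4 => Stmt16Aux.no_cross_edge hD hc2 hc1 hne.symm hB2 hB1 h1 h2 h3 h4
  have main : ∀ S1 S2 : Set V, S1 ⊆ W1 ∩ TG.L → S2 ⊆ W2 ∩ TG.L →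
      S1 ∩ (B t ∩ TG.L) = Q → S2 ∩ (B t ∩ TG.L) = Q →
      GammaLoc TG W (S1 ∪ S2) =
        symmDiff (symmDiff (GammaLoc TG W1 S1) (GammaLoc TG W2 S2))
          (GammaBag TG W (B t) Q) := by
    intro S1 S2 h1 h2 h3 h4
    rw [hUnion]
    exact Stmt16Aux.gamma_union TG h1 h2 h3 h4 hInter hBtW1 hBtW2 hcr12 hcr21
  have hrec : ∀ (WA WB SA SB : Set V), SA ⊆ WA ∩ TG.L → SB ⊆ WB ∩ TG.L →
      SA ∩ (B t ∩ TG.L) = Q → SB ∩ (B t ∩ TG.L) = Q → WA ∩ WB ⊆ B t →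
      (SA ∪ SB) ∩ WA = SA := by
    intro WA WB SA SB hA hB hqA hqB hAB
    apply Set.eq_of_subset_of_subset
    · rintro v ⟨hv12, hvWA⟩
      rcases hv12 with hv | hv
      · exact hv
      · have hvB : v ∈ B t := hAB ⟨hvWA, (hB hv).1⟩
        have hvQ : v ∈ Q := by rw [← hqB]; exact ⟨hv, hvB, (hB hv).2⟩
        rw [← hqA] at hvQ
        exact hvQ.1
    · intro v hv
      exact ⟨Or.inl hv, (hA hv).1⟩
  constructor
  · refine ⟨?_, ?_, ?_⟩
    · -- MapsTo
      rintro ⟨S1, S2⟩ ⟨R1, R2, hRR, ⟨hne1, hsub1, hq1, hg1⟩, ⟨hne2, hsub2, hq2, hg2⟩⟩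
      rw [← hB1] at hq1
      rw [← hB2] at hq2
      simp only [Set.mem_setOf_eq]
      refine ⟨?_, ?_, ?_, ?_⟩
      · obtain ⟨x, hx⟩ := hne1
        exact ⟨x, Or.inl hx⟩
      · rw [hUnion]
        rintro v (h | h)
        · exact ⟨Or.inl (hsub1 h).1, (hsub1 h).2⟩
        · exact ⟨Or.inr (hsub2 h).1, (hsub2 h).2⟩
      · rw [Set.union_inter_distrib_right, hq1, hq2, Set.union_self]
      · rw [main S1 S2 hsub1 hsub2 hq1 hq2, hg1, hg2]
        exact hRR
    · -- InjOn
      rintro ⟨S1, S2⟩ ⟨R1, R2, _, ⟨_, hsub1, hq1, _⟩, ⟨_, hsub2, hq2, _⟩⟩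
        ⟨S1', S2'⟩ ⟨R1', R2', _, ⟨_, hsub1', hq1', _⟩, ⟨_, hsub2', hq2', _⟩⟩ heq
      rw [← hB1] at hq1 hq1'
      rw [← hB2] at hq2 hq2'
      simp only at heq
      have hInter' : W2 ∩ W1 ⊆ B t := by rw [Set.inter_comm]; exact hInter
      have e1 : S1 = S1' := by
        rw [← hrec W1 W2 S1 S2 hsub1 hsub2 hq1 hq2 hInter,
          ← hrec W1 W2 S1' S2' hsub1' hsub2' hq1' hq2' hInter, heq]
      have e2 : S2 = S2' := by
        rw [← hrec W2 W1 S2 S1 hsub2 hsub1 hq2 hq1 hInter',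
          ← hrec W2 W1 S2' S1' hsub2' hsub1' hq2' hq1' hInter',
          Set.union_comm S2 S1, Set.union_comm S2' S1', heq]
      rw [Prod.ext_iff]
      exact ⟨e1, e2⟩
    · -- SurjOn
      rintro S ⟨hSne, hSsub, hSQ, hSG⟩
      have hSW : S ⊆ W := fun v hv => (hSsub hv).1
      have hun : S ∩ W1 ∪ S ∩ W2 = S := by
        rw [← Set.inter_union_distrib_left, ← hUnion,
          Set.inter_eq_self_of_subset_left hSW]
      have hsub1 : S ∩ W1 ⊆ W1 ∩ TG.L := fun v hv => ⟨hv.2, (hSsub hv.1).2⟩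
      have hsub2 : S ∩ W2 ⊆ W2 ∩ TG.L := fun v hv => ⟨hv.2, (hSsub hv.1).2⟩
      have hq1 : S ∩ W1 ∩ (B t ∩ TG.L) = Q := by
        rw [← hSQ]
        ext v
        constructor
        · rintro ⟨⟨hv1, _⟩, hv2⟩; exact ⟨hv1, hv2⟩
        · rintro ⟨hv1, hv2⟩; exact ⟨⟨hv1, hBtW1 hv2.1⟩, hv2⟩
      have hq2 : S ∩ W2 ∩ (B t ∩ TG.L) = Q := by
        rw [← hSQ]
        ext v
        constructor
        · rintro ⟨⟨hv1, _⟩, hv2⟩; exact ⟨hv1, hv2⟩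
        · rintro ⟨hv1, hv2⟩; exact ⟨⟨hv1, hBtW2 hv2.1⟩, hv2⟩
      have hQS1 : Q ⊆ S ∩ W1 := by
        intro v hv
        rw [← hSQ] at hv
        exact ⟨hv.1, hBtW1 hv.2.1⟩
      refine ⟨(S ∩ W1, S ∩ W2), ?_, ?_⟩
      · refine ⟨GammaLoc TG W1 (S ∩ W1), GammaLoc TG W2 (S ∩ W2), ?_, ?_, ?_⟩
        · rw [← main (S ∩ W1) (S ∩ W2) hsub1 hsub2 hq1 hq2, hun, hSG]
        · exact ⟨hQne.mono hQS1, hsub1, by rw [← hB1]; exact hq1, rfl⟩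
        · have hQS2 : Q ⊆ S ∩ W2 := by
            intro v hv
            rw [← hSQ] at hv
            exact ⟨hv.1, hBtW2 hv.2.1⟩
          exact ⟨hQne.mono hQS2, hsub2, by rw [← hB2]; exact hq2, rfl⟩
      · exact hun
  · -- sizes
    rintro ⟨S1, S2⟩ ⟨R1, R2, _, ⟨_, hsub1, hq1, _⟩, ⟨_, hsub2, hq2, _⟩⟩
    rw [← hB1] at hq1
    rw [← hB2] at hq2
    have h12 : S1 ∩ S2 = Q := Stmt16Aux.inter_eq_Q hsub1 hsub2 hq1 hq2 hInter
    have hcard := Set.ncard_union_add_ncard_inter S1 S2 (Set.toFinite _) (Set.toFinite _)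
    rw [h12] at hcard
    simp only
    omega
end

section
/- Let G be a Tanner graph with a rooted tree decomposition, and let t be a join node with children t1 and t2 (B_t = B_{t1} = B_{t2}). If S is a trapping set with parameters (R',∅) in G_{t1} (respectively in G_{t2}), then S is a trapping set with parameters (R',∅) in G_t. -/
open SimpleGraph

/-- `Desc` is reflexive when the tree is connected. -/
lemma Desc.refl' {ι : Type*} {T : SimpleGraph ι} (hT : T.Connected) (root t : ι) :
    Desc T root t t := by
  classical
  obtain ⟨p⟩ := hT.preconnected root t
  exact ⟨(p.toPath : T.Walk root t), p.toPath.2, SimpleGraph.Walk.end_mem_support _⟩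

/-- Along a tree edge `a — b`, if `b` is a descendant of `t1` but `a` is not,
then `b = t1`. -/
lemma desc_adj {ι : Type*} {T : SimpleGraph ι} (hT : T.IsTree) {root t1 a b : ι}
    (hab : T.Adj a b) (hb : Desc T root t1 b) (ha : ¬ Desc T root t1 a) :
    b = t1 := by
  classical
  obtain ⟨q, hq, ht1q⟩ := hb
  obtain ⟨p0⟩ := hT.isConnected.preconnected root a
  set pa : T.Walk root a := (p0.toPath : T.Walk root a) with hpa
  have hpaPath : pa.IsPath := p0.toPath.2
  have ht1pa : t1 ∉ pa.support := fun h => ha ⟨pa, hpaPath, h⟩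
  by_cases hbmem : b ∈ pa.support
  · have hpath : (pa.takeUntil b hbmem).IsPath := hpaPath.takeUntil hbmem
    have heq : q = pa.takeUntil b hbmem :=
      (hT.existsUnique_path root b).unique hq hpath
    have : t1 ∈ (pa.takeUntil b hbmem).support := heq ▸ ht1q
    exact absurd (Walk.support_takeUntil_subset _ hbmem this) ht1pa
  · have hpath : (pa.concat hab).IsPath := by
      rw [← Walk.isPath_reverse_iff, Walk.reverse_concat]
      exact hpaPath.reverse.cons (by rwa [Walk.support_reverse, List.mem_reverse])
    have heq : q = pa.concat hab :=
      (hT.existsUnique_path root b).unique hq hpath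
    have : t1 ∈ (pa.concat hab).support := heq ▸ ht1q
    rw [Walk.support_concat, List.mem_append] at this
    rcases this with h | h
    · exact absurd h ht1pa
    · exact (List.mem_singleton.1 h).symm

/-- Descendance propagates from a child to its parent. -/
lemma desc_child {ι : Type*} {T : SimpleGraph ι} (hT : T.IsTree) {root s t i : ι}
    (hc : IsChildOf T root s t) (h : Desc T root s i) : Desc T root t i := by
  classical
  obtain ⟨p, hp, hs⟩ := h
  obtain ⟨q, hq, ht⟩ := hc.2
  have h1 : (p.takeUntil s hs).IsPath := hp.takeUntil hs
  have heq : q = p.takeUntil s hs := (hT.existsUnique_path root s).unique hq h1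
  exact ⟨p, hp, Walk.support_takeUntil_subset _ hs (heq ▸ ht)⟩

/-- If a vertex `v` lies in a bag of a descendant of `t1` but not in `B t1`,
then every bag containing `v` belongs to a descendant of `t1`. -/
lemma desc_of_bag {V ι : Type*} {G : SimpleGraph V} {T : SimpleGraph ι}
    {root : ι} {B : ι → Set V}
    (hD : IsRootedTreeDecomp G T root B) {t t1 : ι} (hc : IsChildOf T root t1 t)
    {v : V} (hv1 : v ∉ B t1) {j : ι} (hj : Desc T root t1 j) (hvj : v ∈ B j)
    {i : ι} (hvi : v ∈ B i) : Desc T root t1 i := by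
  obtain ⟨w⟩ := (hD.connBags v).preconnected ⟨j, hvj⟩ ⟨i, hvi⟩
  suffices H : ∀ (a b : {i | v ∈ B i}) (w : (T.induce {i | v ∈ B i}).Walk a b),
      Desc T root t1 a.val → Desc T root t1 b.val from H _ _ w hj
  intro a b w
  induction w with
  | nil => exact id
  | @cons a c b' hadj q ih =>
    intro ha
    apply ih
    by_contra hc'
    have hadj' : T.Adj a.val c.val := hadj
    have : a.val = t1 := desc_adj hD.isTree hadj'.symm ha hc'
    exact hv1 (this ▸ a.2)

/-- Key lemma: lifting a trapping set with parameters `(R', ∅)` from a child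
`s` with `B t = B s` to the parent `t`. -/
lemma key_lift {V ι : Type*} (TG : TannerGraph V) (T : SimpleGraph ι)
    (root : ι) (B : ι → Set V)
    (hD : IsRootedTreeDecomp TG.G T root B) {t s : ι} (hc : IsChildOf T root s t)
    (hB : B t = B s) (S R' : Set V)
    (h : HasParams TG (subVerts T root B s) (B s) S R' ∅) :
    HasParams TG (subVerts T root B t) (B t) S R' ∅ := by
  obtain ⟨hne, hsub, hQ, hG⟩ := h
  have hWsub : subVerts T root B s ⊆ subVerts T root B t := by
    rintro v ⟨i, hi, hvi⟩
    exact ⟨i, desc_child hD.isTree hc hi, hvi⟩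
  have hSW : S ⊆ subVerts T root B s := fun v hv => (hsub hv).1
  have hSL : S ⊆ TG.L := fun v hv => (hsub hv).2
  have hSB : ∀ v ∈ S, v ∉ B s := by
    intro v hv hvB
    have : v ∈ S ∩ (B s ∩ TG.L) := ⟨hv, hvB, hSL hv⟩
    rw [hQ] at this
    exact this
  have hset : ∀ (c : V) (W : Set V), S ⊆ W →
      TG.G.neighborSet c ∩ W ∩ S = TG.G.neighborSet c ∩ S := by
    intro c W hW
    ext x
    exact ⟨fun ⟨⟨h1, _⟩, h3⟩ => ⟨h1, h3⟩, fun ⟨h1, h3⟩ => ⟨⟨h1, hW h3⟩, h3⟩⟩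
  have hGamma : GammaLoc TG (subVerts T root B t) S
      = GammaLoc TG (subVerts T root B s) S := by
    ext c
    simp only [GammaLoc, Set.mem_setOf_eq,
      hset c _ hSW, hset c _ (hSW.trans hWsub)]
    refine ⟨fun ⟨hR, hW, hodd⟩ => ⟨hR, ?_, hodd⟩, fun ⟨hR, hW, hodd⟩ =>
      ⟨hR, hWsub hW, hodd⟩⟩
    · -- get a neighbour of c in S
      have hpos : (TG.G.neighborSet c ∩ S).ncard ≠ 0 := by
        intro h0
        rw [h0] at hodd
        exact (Nat.not_odd_iff_even.2 Even.zero) hodd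
      obtain ⟨v, hvN, hvS⟩ := Set.nonempty_of_ncard_ne_zero hpos
      obtain ⟨i, hci, hvi⟩ := hD.coversEdge hvN
      obtain ⟨j, hj, hvj⟩ := hSW hvS
      exact ⟨i, desc_of_bag hD hc (hSB v hvS) hj hvj hvi, hci⟩
  exact ⟨hne, fun v hv => ⟨hWsub (hSW hv), hSL hv⟩, by rw [hB]; exact hQ,
    by rw [hGamma]; exact hG⟩

/-- at a join node, a trapping set with parameters `(R', ∅)` in
`G_{t1}` (resp. `G_{t2}`) is a trapping set with parameters `(R', ∅)` in `G_t`. -/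
theorem stmt_17 {V ι : Type*} [Fintype V] [Fintype ι]
    (TG : TannerGraph V) (T : SimpleGraph ι) (root : ι) (B : ι → Set V)
    (hD : IsRootedTreeDecomp TG.G T root B)
    (t t1 t2 : ι)
    (hc1 : IsChildOf T root t1 t) (hc2 : IsChildOf T root t2 t) (hne : t1 ≠ t2)
    (honly : ∀ s, IsChildOf T root s t → s = t1 ∨ s = t2)
    (hB1 : B t = B t1) (hB2 : B t = B t2)
    (S R' : Set V) :
    (HasParams TG (subVerts T root B t1) (B t1) S R' ∅ →
      HasParams TG (subVerts T root B t) (B t) S R' ∅) ∧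
    (HasParams TG (subVerts T root B t2) (B t2) S R' ∅ →
      HasParams TG (subVerts T root B t) (B t) S R' ∅) := by
  exact ⟨key_lift TG T root B hD hc1 hB1 S R',
    key_lift TG T root B hD hc2 hB2 S R'⟩
end
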